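/- Let r be a positive odd integer and n ≥ 2. If W ⊆ 2^{[n]} is a weakly r-separated collection, then the collection W⁻ := {A ⊆ [n−1] : A ∈ W or A∪{n} ∈ W} is a weakly r-separated collection of subsets of [n−1]. -/
import Mathlib


open Finset

/-- An alternating sequence for the pair of sets `A`, `B`: a strictly increasing
sequence whose odd-position elements lie in one of `A \ B`, `B \ A` and whose
even-position elements lie in the other. -/
def IsAltSeq (A B : Finset ℕ) {m : ℕ} (f : Fin m → ℕ) : Prop :=
  StrictMono f ∧
    ((∀ j : Fin m, (j : ℕ) % 2 = 0 → f j ∈ A \ B) ∧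
        (∀ j : Fin m, (j : ℕ) % 2 = 1 → f j ∈ B \ A) ∨
      (∀ j : Fin m, (j : ℕ) % 2 = 0 → f j ∈ B \ A) ∧
        (∀ j : Fin m, (j : ℕ) % 2 = 1 → f j ∈ A \ B))

/-- `altLen A B` is the maximum length of an alternating sequence for `A`, `B`. -/
noncomputable def altLen (A B : Finset ℕ) : ℕ :=
  sSup {m : ℕ | ∃ f : Fin m → ℕ, IsAltSeq A B f}

/-- `A` surrounds `B`:  `min (A \ B) < min (B \ A)` and `max (B \ A) < max (A \ B)`. -/
def Surrounds (A B : Finset ℕ) : Prop :=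
  (A \ B).min < (B \ A).min ∧ (B \ A).max < (A \ B).max

/-- Weak `r`-separation for an odd `r`. -/
def WeaklySep (r : ℕ) (A B : Finset ℕ) : Prop :=
  altLen A B ≤ r + 2 ∧
    (altLen A B = r + 2 →
      Surrounds A B ∧ A.card ≤ B.card ∨ Surrounds B A ∧ B.card ≤ A.card)

/-- A single alternation pattern: even positions in `X \ Y`, odd positions in `Y \ X`. -/
def AltPat (X Y : Finset ℕ) {m : ℕ} (f : Fin m → ℕ) : Prop :=
  StrictMono f ∧
    ∀ j : Fin m, ((j : ℕ) % 2 = 0 → f j ∈ X \ Y) ∧ ((j : ℕ) % 2 = 1 → f j ∈ Y \ X)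

lemma isAltSeq_iff {A B : Finset ℕ} {m : ℕ} {f : Fin m → ℕ} :
    IsAltSeq A B f ↔ AltPat A B f ∨ AltPat B A f := by
  unfold IsAltSeq AltPat
  constructor
  · rintro ⟨hs, h | h⟩
    · exact Or.inl ⟨hs, fun j => ⟨h.1 j, h.2 j⟩⟩
    · exact Or.inr ⟨hs, fun j => ⟨h.1 j, h.2 j⟩⟩
  · rintro (⟨hs, h⟩ | ⟨hs, h⟩)
    · exact ⟨hs, Or.inl ⟨fun j hj => (h j).1 hj, fun j hj => (h j).2 hj⟩⟩
    · exact ⟨hs, Or.inr ⟨fun j hj => (h j).1 hj, fun j hj => (h j).2 hj⟩⟩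

lemma altPat_mem_union {X Y : Finset ℕ} {m : ℕ} {f : Fin m → ℕ} (h : AltPat X Y f)
    (j : Fin m) : f j ∈ X \ Y ∪ Y \ X := by
  rcases Nat.mod_two_eq_zero_or_one (j : ℕ) with hj | hj
  · exact mem_union_left _ ((h.2 j).1 hj)
  · exact mem_union_right _ ((h.2 j).2 hj)

lemma isAltSeq_mem_union {A B : Finset ℕ} {m : ℕ} {f : Fin m → ℕ} (h : IsAltSeq A B f)
    (j : Fin m) : f j ∈ A \ B ∪ B \ A := by
  rcases isAltSeq_iff.mp h with h | h
  · exact altPat_mem_union h j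
  · have := altPat_mem_union h j
    rwa [union_comm] at this

lemma altLen_bdd (A B : Finset ℕ) :
    BddAbove {m : ℕ | ∃ f : Fin m → ℕ, IsAltSeq A B f} := by
  refine ⟨(A \ B ∪ B \ A).card, ?_⟩
  rintro m ⟨f, hf⟩
  have h1 : (Finset.univ : Finset (Fin m)).card ≤ (A \ B ∪ B \ A).card := by
    apply Finset.card_le_card_of_injOn f
    · exact fun j _ => isAltSeq_mem_union hf j
    · exact Set.injOn_of_injective hf.1.injective
  simpa using h1

lemma isAltSeq_zero (A B : Finset ℕ) :
    IsAltSeq A B (fun j : Fin 0 => (0 : ℕ)) := by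
  refine ⟨fun i => i.elim0, Or.inl ⟨fun j => j.elim0, fun j => j.elim0⟩⟩

lemma le_altLen {A B : Finset ℕ} {m : ℕ} {f : Fin m → ℕ} (h : IsAltSeq A B f) :
    m ≤ altLen A B :=
  le_csSup (altLen_bdd A B) ⟨f, h⟩

lemma exists_altSeq (A B : Finset ℕ) :
    ∃ f : Fin (altLen A B) → ℕ, IsAltSeq A B f := by
  have h0 : (0 : ℕ) ∈ {m : ℕ | ∃ f : Fin m → ℕ, IsAltSeq A B f} :=
    ⟨_, isAltSeq_zero A B⟩
  exact Nat.sSup_mem ⟨0, h0⟩ (altLen_bdd A B)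

lemma altPat_mono {X Y X' Y' : Finset ℕ} (h1 : X \ Y ⊆ X' \ Y') (h2 : Y \ X ⊆ Y' \ X')
    {m : ℕ} {f : Fin m → ℕ} (h : AltPat X Y f) : AltPat X' Y' f :=
  ⟨h.1, fun j => ⟨fun hj => h1 ((h.2 j).1 hj), fun hj => h2 ((h.2 j).2 hj)⟩⟩

lemma altLen_mono {A B A' B' : Finset ℕ} (h1 : A \ B ⊆ A' \ B') (h2 : B \ A ⊆ B' \ A') :
    altLen A B ≤ altLen A' B' := by
  obtain ⟨f, hf⟩ := exists_altSeq A B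
  apply le_altLen (f := f)
  rcases isAltSeq_iff.mp hf with h | h
  · exact isAltSeq_iff.mpr (Or.inl (altPat_mono h1 h2 h))
  · exact isAltSeq_iff.mpr (Or.inr (altPat_mono h2 h1 h))

lemma altLen_congr {A B A' B' : Finset ℕ} (h1 : A \ B = A' \ B') (h2 : B \ A = B' \ A') :
    altLen A B = altLen A' B' :=
  le_antisymm (altLen_mono (by rw [h1]) (by rw [h2])) (altLen_mono (by rw [h1]) (by rw [h2]))

lemma isAltSeq_comm {A B : Finset ℕ} {m : ℕ} {f : Fin m → ℕ} :
    IsAltSeq A B f ↔ IsAltSeq B A f := by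
  rw [isAltSeq_iff, isAltSeq_iff, or_comm]

lemma altLen_comm (A B : Finset ℕ) : altLen A B = altLen B A := by
  unfold altLen
  congr 1
  ext m
  exact exists_congr fun f => isAltSeq_comm

lemma weaklySep_symm {r : ℕ} {A B : Finset ℕ} (h : WeaklySep r A B) : WeaklySep r B A := by
  obtain ⟨h1, h2⟩ := h
  have hc : altLen B A = altLen A B := altLen_comm B A
  exact ⟨hc ▸ h1, fun he => Or.symm (h2 (hc ▸ he))⟩

lemma altPat_snoc {X Y : Finset ℕ} {m : ℕ} {f : Fin m → ℕ} (h : AltPat X Y f) {a : ℕ}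
    (ha : ∀ j, f j < a)
    (hpar : (m % 2 = 0 → a ∈ X \ Y) ∧ (m % 2 = 1 → a ∈ Y \ X)) :
    ∃ g : Fin (m + 1) → ℕ, AltPat X Y g := by
  refine ⟨fun j => if hj : (j : ℕ) < m then f ⟨j, hj⟩ else a, ?_, ?_⟩
  · intro i j hij
    have hij' : (i : ℕ) < (j : ℕ) := hij
    by_cases hi : (i : ℕ) < m <;> by_cases hj : (j : ℕ) < m
    · simp only [dif_pos hi, dif_pos hj]
      exact h.1 (show (⟨(i : ℕ), hi⟩ : Fin m) < ⟨(j : ℕ), hj⟩ from hij')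
    · simp only [dif_pos hi, dif_neg hj]
      exact ha _
    · omega
    · omega
  · intro j
    by_cases hj : (j : ℕ) < m
    · simp only [dif_pos hj]
      exact h.2 ⟨j, hj⟩
    · have hm : (j : ℕ) = m := by omega
      simp only [dif_neg hj]
      rw [hm]
      exact hpar

lemma altPat_cons {X Y : Finset ℕ} {m : ℕ} {f : Fin m → ℕ} (h : AltPat X Y f) {a : ℕ}
    (ha : ∀ j, a < f j) (haY : a ∈ Y \ X) :
    ∃ g : Fin (m + 1) → ℕ, AltPat Y X g := by
  refine ⟨fun j => if hj : (j : ℕ) = 0 then a else f ⟨(j : ℕ) - 1, by omega⟩, ?_, ?_⟩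
  · intro i j hij
    have hij' : (i : ℕ) < (j : ℕ) := hij
    by_cases hi : (i : ℕ) = 0 <;> by_cases hj : (j : ℕ) = 0
    · omega
    · simp only [dif_pos hi, dif_neg hj]
      exact ha _
    · omega
    · simp only [dif_neg hi, dif_neg hj]
      exact h.1 (show (⟨(i : ℕ) - 1, by omega⟩ : Fin m) < ⟨(j : ℕ) - 1, by omega⟩ by
        simp only [Fin.mk_lt_mk]; omega)
  · intro j
    by_cases hj : (j : ℕ) = 0
    · simp only [dif_pos hj, hj]
      exact ⟨fun _ => haY, fun hc => by omega⟩
    · simp only [dif_neg hj]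
      constructor
      · intro hpar
        exact (h.2 ⟨(j : ℕ) - 1, by omega⟩).2 (by simp only; omega)
      · intro hpar
        exact (h.2 ⟨(j : ℕ) - 1, by omega⟩).1 (by simp only; omega)

lemma notMem_Icc_self {n : ℕ} (hn : 2 ≤ n) : n ∉ Finset.Icc 1 (n - 1) := by
  simp only [mem_Icc]
  omega

/-- Core geometric lemma: if `altLen A B = r + 2` but `altLen A (insert n B) ≤ r + 2`,
then `B` surrounds `A`. -/
lemma core_surrounds (r n : ℕ) (hr : Odd r) (hn : 2 ≤ n) (A B : Finset ℕ)
    (hA : A ⊆ Finset.Icc 1 (n - 1)) (hB : B ⊆ Finset.Icc 1 (n - 1))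
    (hlen : altLen A B = r + 2) (hlen' : altLen A (insert n B) ≤ r + 2) :
    Surrounds B A := by
  obtain ⟨k, hk⟩ := hr
  have hr1 : 1 ≤ r := by omega
  have hnA : n ∉ A := fun h => notMem_Icc_self hn (hA h)
  have hnB : n ∉ B := fun h => notMem_Icc_self hn (hB h)
  have hdiff1 : A \ insert n B = A \ B := by
    ext x
    simp only [mem_sdiff, mem_insert, not_or]
    constructor
    · rintro ⟨h1, _, h3⟩
      exact ⟨h1, h3⟩
    · rintro ⟨h1, h2⟩
      exact ⟨h1, fun he => hnA (he ▸ h1), h2⟩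
  have hseq := exists_altSeq A B
  rw [hlen] at hseq
  obtain ⟨f, hf⟩ := hseq
  have hfbound : ∀ j, f j < n := by
    intro j
    have := isAltSeq_mem_union hf j
    rcases mem_union.mp this with h | h
    · have := hA (mem_sdiff.mp h).1
      simp only [mem_Icc] at this
      omega
    · have := hB (mem_sdiff.mp h).1
      simp only [mem_Icc] at this
      omega
  rcases isAltSeq_iff.mp hf with hP | hP
  · -- pattern starts in A \ B : extend by n to contradict hlen'
    exfalso
    have hP' : AltPat A (insert n B) f := by
      refine altPat_mono ?_ ?_ hP
      · rw [hdiff1]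
      · exact sdiff_subset_sdiff (subset_insert n B) (Finset.Subset.refl A)
    have hnmem : n ∈ insert n B \ A := mem_sdiff.mpr ⟨mem_insert_self n B, hnA⟩
    obtain ⟨g, hg⟩ := altPat_snoc hP' hfbound
      ⟨fun h => by omega, fun _ => hnmem⟩
    have := le_altLen (isAltSeq_iff.mpr (Or.inl hg))
    omega
  · -- pattern starts in B \ A
    have h0lt : 0 < r + 2 := by omega
    have h1lt : 1 < r + 2 := by omega
    have hmem0 : f ⟨0, h0lt⟩ ∈ B \ A := (hP.2 ⟨0, h0lt⟩).1 (by norm_num)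
    have hmem1 : f ⟨1, h1lt⟩ ∈ A \ B := (hP.2 ⟨1, h1lt⟩).2 (by norm_num)
    have hBA : (B \ A).Nonempty := ⟨_, hmem0⟩
    have hAB : (A \ B).Nonempty := ⟨_, hmem1⟩
    have hne : (A \ B).min' hAB ≠ (B \ A).min' hBA := by
      intro he
      have h1 := Finset.min'_mem (A \ B) hAB
      have h2 := Finset.min'_mem (B \ A) hBA
      rw [he] at h1
      simp only [mem_sdiff] at h1 h2
      exact h1.2 h2.1
    have hne' : (A \ B).max' hAB ≠ (B \ A).max' hBA := by
      intro he
      have h1 := Finset.max'_mem (A \ B) hAB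
      have h2 := Finset.max'_mem (B \ A) hBA
      rw [he] at h1
      simp only [mem_sdiff] at h1 h2
      exact h1.2 h2.1
    -- min comparison
    have hminlt : (B \ A).min' hBA < (A \ B).min' hAB := by
      rcases lt_trichotomy ((A \ B).min' hAB) ((B \ A).min' hBA) with h | h | h
      · exfalso
        set a := (A \ B).min' hAB with hadef
        have haA : a ∈ A \ B := Finset.min'_mem _ _
        have haf : ∀ j, a < f j := by
          intro j
          have h01 : a < f ⟨0, h0lt⟩ :=
            lt_of_lt_of_le h (Finset.min'_le _ _ hmem0)
          exact lt_of_lt_of_le h01 (hP.1.monotone (by simp [Fin.le_def]))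
        obtain ⟨g, hg⟩ := altPat_cons hP haf haA
        have := le_altLen (isAltSeq_iff.mpr (Or.inl hg))
        omega
      · exact absurd h hne
      · exact h
    -- max comparison
    have hmaxlt : (A \ B).max' hAB < (B \ A).max' hBA := by
      rcases lt_trichotomy ((A \ B).max' hAB) ((B \ A).max' hBA) with h | h | h
      · exact h
      · exact absurd h hne'
      · exfalso
        set a := (A \ B).max' hAB with hadef
        have haA : a ∈ A \ B := Finset.max'_mem _ _
        have hlast : f ⟨r + 1, by omega⟩ ∈ B \ A :=
          (hP.2 ⟨r + 1, by omega⟩).1 (by simp only; omega)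
        have haf : ∀ j, f j < a := by
          intro j
          have h1 : f j ≤ f ⟨r + 1, by omega⟩ := by
            apply hP.1.monotone
            simp only [Fin.le_def]
            omega
          have h2 : f ⟨r + 1, by omega⟩ ≤ (B \ A).max' hBA :=
            Finset.le_max' _ _ hlast
          omega
        obtain ⟨g, hg⟩ := altPat_snoc hP haf ⟨fun hc => by omega, fun _ => haA⟩
        have := le_altLen (isAltSeq_iff.mpr (Or.inr hg))
        omega
    constructor
    · rw [← Finset.coe_min' hBA, ← Finset.coe_min' hAB]
      exact_mod_cast hminlt
    · rw [← Finset.coe_max' hBA, ← Finset.coe_max' hAB]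
      exact_mod_cast hmaxlt

/-- The mixed case : `A ∈ W` and `insert n B ∈ W`. -/
lemma case_mixed (r n : ℕ) (hr : Odd r) (hn : 2 ≤ n) (A B : Finset ℕ)
    (hA : A ⊆ Finset.Icc 1 (n - 1)) (hB : B ⊆ Finset.Icc 1 (n - 1))
    (hsep : WeaklySep r A (insert n B)) : WeaklySep r A B := by
  have hnA : n ∉ A := fun h => notMem_Icc_self hn (hA h)
  have hnB : n ∉ B := fun h => notMem_Icc_self hn (hB h)
  have hdiff1 : A \ insert n B = A \ B := by
    ext x
    simp only [mem_sdiff, mem_insert, not_or]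
    constructor
    · rintro ⟨h1, _, h3⟩
      exact ⟨h1, h3⟩
    · rintro ⟨h1, h2⟩
      exact ⟨h1, fun he => hnA (he ▸ h1), h2⟩
  have hmono : altLen A B ≤ altLen A (insert n B) := by
    apply altLen_mono
    · rw [hdiff1]
    · exact sdiff_subset_sdiff (subset_insert n B) (Finset.Subset.refl A)
  refine ⟨le_trans hmono hsep.1, fun he => ?_⟩
  have heq : altLen A (insert n B) = r + 2 :=
    le_antisymm hsep.1 (he ▸ hmono)
  rcases hsep.2 heq with ⟨hsur, _⟩ | ⟨_, hcard⟩
  · -- impossible: max (insert n B \ A) ≥ n > everything in A \ insert n B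
    exfalso
    have hnmem : n ∈ insert n B \ A := mem_sdiff.mpr ⟨mem_insert_self n B, hnA⟩
    have h1 : (n : WithBot ℕ) ≤ (insert n B \ A).max := Finset.le_max hnmem
    have h2 : (n : WithBot ℕ) < (A \ insert n B).max := lt_of_le_of_lt h1 hsur.2
    have h3 : (A \ insert n B).max ≤ ((n - 1 : ℕ) : WithBot ℕ) := by
      apply Finset.max_le
      intro b hb
      have := hA (mem_sdiff.mp hb).1
      simp only [mem_Icc] at this
      exact WithBot.coe_le_coe.mpr this.2
    have h4 : (n : WithBot ℕ) < ((n - 1 : ℕ) : WithBot ℕ) := lt_of_lt_of_le h2 h3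
    have h5 : n < n - 1 := WithBot.coe_lt_coe.mp h4
    omega
  · right
    constructor
    · exact core_surrounds r n hr hn A B hA hB he heq.le
    · rw [Finset.card_insert_of_notMem hnB] at hcard
      omega

lemma insert_sdiff_insert_eq {n : ℕ} {A B : Finset ℕ} (hnA : n ∉ A) :
    insert n A \ insert n B = A \ B := by
  ext x
  simp only [mem_sdiff, mem_insert, not_or]
  constructor
  · rintro ⟨h1 | h1, h2, h3⟩
    · exact absurd h1 h2
    · exact ⟨h1, h3⟩
  · rintro ⟨h1, h2⟩
    exact ⟨Or.inr h1, fun he => hnA (he ▸ h1), h2⟩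

lemma weaklySep_of_insert {r n : ℕ} {A B : Finset ℕ} (hnA : n ∉ A) (hnB : n ∉ B)
    (h : WeaklySep r (insert n A) (insert n B)) : WeaklySep r A B := by
  have hd1 : insert n A \ insert n B = A \ B := insert_sdiff_insert_eq hnA
  have hd2 : insert n B \ insert n A = B \ A := insert_sdiff_insert_eq hnB
  have hl : altLen (insert n A) (insert n B) = altLen A B := altLen_congr hd1 hd2
  refine ⟨hl ▸ h.1, fun he => ?_⟩
  rcases h.2 (by rw [hl]; exact he) with ⟨hs, hc⟩ | ⟨hs, hc⟩
  · left
    refine ⟨?_, ?_⟩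
    · unfold Surrounds at hs ⊢
      rwa [hd1, hd2] at hs
    · rwa [Finset.card_insert_of_notMem hnA, Finset.card_insert_of_notMem hnB,
        Nat.add_le_add_iff_right] at hc
  · right
    refine ⟨?_, ?_⟩
    · unfold Surrounds at hs ⊢
      rwa [hd1, hd2] at hs
    · rwa [Finset.card_insert_of_notMem hnA, Finset.card_insert_of_notMem hnB,
        Nat.add_le_add_iff_right] at hc

/-- the collection W⁻ = {A ⊆ [n-1] : A ∈ W or A ∪ {n} ∈ W}
is weakly r-separated whenever W is. -/
theorem weaklySep_deletion (r n : ℕ) (hr : Odd r) (hn : 2 ≤ n)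
    (W : Finset (Finset ℕ)) (hWsub : ∀ A ∈ W, A ⊆ Finset.Icc 1 n)
    (hWsep : ∀ A ∈ W, ∀ B ∈ W, WeaklySep r A B) :
    ∀ A B : Finset ℕ,
      A ⊆ Finset.Icc 1 (n - 1) → (A ∈ W ∨ insert n A ∈ W) →
      B ⊆ Finset.Icc 1 (n - 1) → (B ∈ W ∨ insert n B ∈ W) →
      WeaklySep r A B := by
  intro A B hA hAW hB hBW
  have hnA : n ∉ A := fun h => notMem_Icc_self hn (hA h)
  have hnB : n ∉ B := fun h => notMem_Icc_self hn (hB h)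
  rcases hAW with hAW | hAW <;> rcases hBW with hBW | hBW
  · exact hWsep A hAW B hBW
  · exact case_mixed r n hr hn A B hA hB (hWsep A hAW _ hBW)
  · exact weaklySep_symm (case_mixed r n hr hn B A hB hA (hWsep B hBW _ hAW))
  · exact weaklySep_of_insert hnA hnB (hWsep _ hAW _ hBW)
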